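/- arXiv:1604.03617 — 3 statements merged into one kernel-verified Lean document; each statement's English description precedes it below -/
import Mathlib

section
/- Let n ≥ 1, α ∈ 𝔽_q*, and let C ⊆ 𝔽_q^n be a skew (α,θ)-cyclic code such that C = C^⊥. Then n is even and α² = 1 (i.e., α = ±1). -/
/-- The skew constacyclic shift `φ_{α,θ}`:
`(c_0, …, c_{n-1}) ↦ (α·θ(c_{n-1}), θ(c_0), …, θ(c_{n-2}))`. -/
def skewShift (n : ℕ) [NeZero n] {F : Type*} [Field F] (θ : F ≃+* F) (α : F)
    (c : Fin n → F) : Fin n → F :=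
  fun i => (if i = 0 then α else 1) * θ (c (i - 1))

/-- The dual code of a set of words. -/
def dualSet {n : ℕ} {F : Type*} [Field F] (C : Set (Fin n → F)) : Set (Fin n → F) :=
  {v | ∀ c ∈ C, ∑ i, v i * c i = 0}

/-- The standard dot-product bilinear form on `Fin n → F`. -/
noncomputable def dotForm (n : ℕ) (F : Type*) [Field F] :
    LinearMap.BilinForm F (Fin n → F) :=
  LinearMap.mk₂ F (fun v c => ∑ i, v i * c i)
    (fun x y z => by simp [add_mul, Finset.sum_add_distrib])
    (fun a x y => by simp [Finset.mul_sum, mul_assoc])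
    (fun x y z => by simp [mul_add, Finset.sum_add_distrib])
    (fun a x y => by simp [Finset.mul_sum]; congr 1; ext i; ring)

lemma dotForm_apply {n : ℕ} {F : Type*} [Field F] (v c : Fin n → F) :
    dotForm n F v c = ∑ i, v i * c i := rfl

lemma dotForm_refl {n : ℕ} {F : Type*} [Field F] : (dotForm n F).IsRefl := by
  intro x y h
  rw [dotForm_apply] at h ⊢
  rw [← h]
  exact Finset.sum_congr rfl fun i _ => mul_comm _ _

lemma dotForm_nondeg {n : ℕ} {F : Type*} [Field F] : (dotForm n F).Nondegenerate := by
  refine LinearMap.BilinForm.Nondegenerate.ofSeparatingLeft ?_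
  intro v h
  funext i
  have := h (Pi.single i 1)
  rw [dotForm_apply] at this
  simpa [Pi.single_apply, Finset.sum_ite_eq'] using this

/-- a self-dual skew `(α,θ)`-cyclic code of length `n ≥ 1`
forces `n` even and `α² = 1`. -/
theorem stmt_4 {n : ℕ} [NeZero n] {F : Type*} [Field F] [Fintype F]
    (θ : F ≃+* F) (α : F) (hα : α ≠ 0)
    (C : Submodule F (Fin n → F))
    (hC : ∀ c ∈ C, skewShift n θ α c ∈ C)
    (hself : (C : Set (Fin n → F)) = dualSet (C : Set (Fin n → F))) :
    Even n ∧ α ^ 2 = 1 := by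
  have hdual : ∀ v, v ∈ C ↔ ∀ c ∈ C, ∑ i, v i * c i = 0 := by
    intro v
    constructor
    · intro hv c hc
      have : v ∈ dualSet (C : Set (Fin n → F)) := hself ▸ hv
      exact this c hc
    · intro hv
      have : v ∈ dualSet (C : Set (Fin n → F)) := hv
      rw [← hself] at this; exact this
  constructor
  · -- Even n : dimension count
    have horth : (dotForm n F).orthogonal C = C := by
      ext v
      rw [LinearMap.BilinForm.mem_orthogonal_iff, hdual v]
      constructor
      · intro h c hc
        have := h c hc
        rw [dotForm_apply] at this
        rw [← this]
        exact Finset.sum_congr rfl fun i _ => mul_comm _ _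
      · intro h c hc
        rw [dotForm_apply, ← h c hc]
        exact Finset.sum_congr rfl fun i _ => mul_comm _ _
    have hfin := LinearMap.BilinForm.finrank_orthogonal
      (B := dotForm n F) dotForm_nondeg C
    rw [horth] at hfin
    have hle : Module.finrank F C ≤ Module.finrank F (Fin n → F) :=
      Submodule.finrank_le C
    rw [Module.finrank_fin_fun] at hfin hle
    refine ⟨Module.finrank F C, by omega⟩
  · -- α² = 1
    by_contra hα2
    set e : Fin n := 0 - 1 with he
    -- key computation
    have key : ∀ c ∈ C, ∀ d ∈ C, (α * α - 1) * θ (c e * d e) = 0 := by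
      intro c hc d hd
      have h1 : ∑ i, c i * d i = 0 := (hdual c).1 hc d hd
      have h2 : ∑ i, skewShift n θ α c i * skewShift n θ α d i = 0 :=
        (hdual _).1 (hC c hc) _ (hC d hd)
      have h3 : ∀ i : Fin n, skewShift n θ α c i * skewShift n θ α d i =
          (if i - 1 = e then α * α else 1) * θ (c (i - 1) * d (i - 1)) := by
        intro i
        rw [skewShift, skewShift, map_mul]
        by_cases hi : i = 0
        · subst hi
          rw [if_pos rfl, if_pos he.symm]
          ring
        · rw [if_neg hi, if_neg (fun h => hi (sub_left_inj.mp (he ▸ h)))]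
          ring
      rw [Finset.sum_congr rfl fun i _ => h3 i] at h2
      have h4 : ∑ i : Fin n, (if i - 1 = e then α * α else 1) * θ (c (i - 1) * d (i - 1)) =
          ∑ j : Fin n, (if j = e then α * α else 1) * θ (c j * d j) :=
        Fintype.sum_equiv (Equiv.subRight (1 : Fin n)) _ _ (fun i => rfl)
      rw [h4] at h2
      have h5 : ∀ j : Fin n, (if j = e then α * α else 1) * θ (c j * d j) =
          θ (c j * d j) + (if j = e then (α * α - 1) * θ (c j * d j) else 0) := by
        intro j; split <;> ring
      rw [Finset.sum_congr rfl fun j _ => h5 j, Finset.sum_add_distrib,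
        Finset.sum_ite_eq' Finset.univ e] at h2
      simp only [Finset.mem_univ, if_true] at h2
      have h6 : ∑ j : Fin n, θ (c j * d j) = 0 := by
        rw [← map_sum, h1, map_zero]
      rw [h6, zero_add] at h2
      exact h2
    have hne : α * α - 1 ≠ 0 := by
      intro h
      apply hα2
      rw [pow_two]
      linear_combination h
    -- every codeword vanishes at e
    have hlast : ∀ c ∈ C, c e = 0 := by
      intro c hc
      have := key c hc c hc
      have h0 : θ (c e * c e) = 0 := by
        rcases mul_eq_zero.1 this with h | h
        · exact absurd h hne
        · exact h
      rw [EmbeddingLike.map_eq_zero_iff] at h0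
      exact (mul_self_eq_zero).1 h0
    -- hence every codeword is zero
    open Fin.CommRing in
    have hzero : ∀ m : ℕ, ∀ c ∈ C, c (e - (m : Fin n)) = 0 := by
      intro m
      induction m with
      | zero => simpa using hlast
      | succ k ih =>
        intro c hc
        have := ih _ (hC c hc)
        rw [skewShift] at this
        rcases mul_eq_zero.1 this with h | h
        · exfalso; revert h; split <;> simp [hα]
        · rw [EmbeddingLike.map_eq_zero_iff] at h
          have : e - ((k : Fin n) + 1) = e - (k : Fin n) - 1 := by ring
          rw [Nat.cast_add, Nat.cast_one, this]
          exact h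
    open Fin.CommRing in
    have hC0 : ∀ c ∈ C, c = 0 := by
      intro c hc
      funext i
      have := hzero (e - i).val c hc
      rwa [Fin.cast_val_eq_self, sub_sub_cancel] at this
    -- then dualSet C is everything, contradiction
    have hone : (fun _ : Fin n => (1 : F)) ∈ C := by
      rw [hdual]
      intro c hc
      rw [hC0 c hc]
      simp
    have := congrFun (hC0 _ hone) 0
    simp at this
end

section
/- Let α ∈ 𝔽_q* and 1 ≤ k ≤ n. For i = 1, 2, let P_i ∈ 𝔽_q^k be a row vector, let T_i be an invertible k×k matrix over 𝔽_q, set τ_i(v) = (θ(v_0), ..., θ(v_{k−1}))·T_i, assume τ_i^n(P_i) = α·P_i, let C_i be the code defined by (τ_i, P_i, n), and assume dim C_i = n − k (so that each C_i is a skew (α,θ)-cyclic [n, n−k]-code defined by (τ_i, P_i, n)). Then C_1 = C_2 if and only if there exists an invertible k×k matrix S over 𝔽_q such that P_1·S = P_2 and τ_2(v) = τ_1(v·S^{−1})·S for all v ∈ 𝔽_q^k (i.e., τ_1 = S·τ_2·S^{−1}). -/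
/-- The θ-semilinear map `τ(v) = (θ(v_0), …, θ(v_{k-1}))·T` attached to a
matrix `T`. -/
def tauMap {k : ℕ} {F : Type*} [Field F] (θ : F ≃+* F)
    (T : Matrix (Fin k) (Fin k) F) : (Fin k → F) → (Fin k → F) :=
  fun v => Matrix.vecMul (fun i => θ (v i)) T

section aux

variable {k : ℕ} {F : Type*} [Field F] (θ : F ≃+* F) (T : Matrix (Fin k) (Fin k) F)

lemma tauMap_zero : tauMap θ T 0 = 0 := by
  unfold tauMap
  rw [show (fun i => θ ((0 : Fin k → F) i)) = (0 : Fin k → F) by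
    funext i; simp, Matrix.zero_vecMul]

lemma tauMap_add (u v : Fin k → F) :
    tauMap θ T (u + v) = tauMap θ T u + tauMap θ T v := by
  unfold tauMap
  rw [show (fun i => θ ((u + v) i)) = (fun i => θ (u i)) + fun i => θ (v i) by
    funext i; simp, Matrix.add_vecMul]

lemma tauMap_smul (a : F) (v : Fin k → F) :
    tauMap θ T (a • v) = θ a • tauMap θ T v := by
  unfold tauMap
  rw [show (fun i => θ ((a • v) i)) = θ a • fun i => θ (v i) by
    funext i; simp [mul_comm], Matrix.smul_vecMul]

lemma vecMul_eq_sum' {n : ℕ} (v : Fin n → F) (M : Matrix (Fin n) (Fin k) F) :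
    Matrix.vecMul v M = ∑ i, v i • M i := by
  funext j
  simp [Matrix.vecMul, dotProduct, Finset.sum_apply]

end aux

/-- two skew `(α,θ)`-cyclic `[n, n-k]`-codes defined by
`(τ₁, P₁, n)` and `(τ₂, P₂, n)` coincide iff there is `S ∈ GL(k,q)` with
`P₁·S = P₂` and `τ₂(v) = τ₁(v·S⁻¹)·S` for all `v` (i.e. `τ₁ = S·τ₂·S⁻¹`). -/
theorem stmt_8 {n k : ℕ} (hk : 1 ≤ k) (hkn : k ≤ n)
    {F : Type*} [Field F] [Fintype F]
    (θ : F ≃+* F) (α : F) (hα : α ≠ 0)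
    (P₁ P₂ : Fin k → F) (T₁ T₂ : Matrix (Fin k) (Fin k) F)
    (hT₁ : IsUnit T₁) (hT₂ : IsUnit T₂)
    (hP₁ : (tauMap θ T₁)^[n] P₁ = α • P₁)
    (hP₂ : (tauMap θ T₂)^[n] P₂ = α • P₂)
    (C₁ C₂ : Submodule F (Fin n → F))
    (hC₁ : (C₁ : Set (Fin n → F)) =
      {c : Fin n → F | ∑ i : Fin n, c i • (tauMap θ T₁)^[(i : ℕ)] P₁ = 0})
    (hC₂ : (C₂ : Set (Fin n → F)) =
      {c : Fin n → F | ∑ i : Fin n, c i • (tauMap θ T₂)^[(i : ℕ)] P₂ = 0})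
    (hd₁ : Module.finrank F C₁ = n - k)
    (hd₂ : Module.finrank F C₂ = n - k) :
    C₁ = C₂ ↔ ∃ S : Matrix (Fin k) (Fin k) F, IsUnit S ∧
      Matrix.vecMul P₁ S = P₂ ∧
      ∀ v : Fin k → F,
        tauMap θ T₂ v = Matrix.vecMul (tauMap θ T₁ (Matrix.vecMul v S⁻¹)) S := by
  classical
  set M₁ : Matrix (Fin n) (Fin k) F := Matrix.of fun i => (tauMap θ T₁)^[(i : ℕ)] P₁ with hM₁
  set M₂ : Matrix (Fin n) (Fin k) F := Matrix.of fun i => (tauMap θ T₂)^[(i : ℕ)] P₂ with hM₂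
  set f₁ := M₁.vecMulLinear with hf₁def
  set f₂ := M₂.vecMulLinear with hf₂def
  have hfapp₁ : ∀ c : Fin n → F, f₁ c = ∑ i : Fin n, c i • (tauMap θ T₁)^[(i : ℕ)] P₁ := by
    intro c
    rw [hf₁def, Matrix.vecMulLinear_apply, vecMul_eq_sum']
    rfl
  have hfapp₂ : ∀ c : Fin n → F, f₂ c = ∑ i : Fin n, c i • (tauMap θ T₂)^[(i : ℕ)] P₂ := by
    intro c
    rw [hf₂def, Matrix.vecMulLinear_apply, vecMul_eq_sum']
    rfl
  have hker₁ : LinearMap.ker f₁ = C₁ := by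
    ext c
    rw [LinearMap.mem_ker, hfapp₁, ← SetLike.mem_coe, hC₁]
    rfl
  have hker₂ : LinearMap.ker f₂ = C₂ := by
    ext c
    rw [LinearMap.mem_ker, hfapp₂, ← SetLike.mem_coe, hC₂]
    rfl
  have hsurj : ∀ (f : (Fin n → F) →ₗ[F] (Fin k → F)),
      Module.finrank F (LinearMap.ker f) = n - k → Function.Surjective f := by
    intro f hf
    have h1 := LinearMap.finrank_range_add_finrank_ker f
    rw [hf, Module.finrank_pi, Fintype.card_fin] at h1
    have h2 : Module.finrank F (LinearMap.range f) = k := by omega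
    have h3 : LinearMap.range f = ⊤ := by
      apply Submodule.eq_top_of_finrank_eq
      rw [h2, Module.finrank_pi]
      simp
    exact LinearMap.range_eq_top.mp h3
  have hsurj₁ : Function.Surjective f₁ := hsurj f₁ (by rw [hker₁]; exact hd₁)
  have hsurj₂ : Function.Surjective f₂ := hsurj f₂ (by rw [hker₂]; exact hd₂)
  constructor
  · -- forward direction
    intro hCC
    have hkk : LinearMap.ker f₁ = LinearMap.ker f₂ := by rw [hker₁, hker₂, hCC]
    let e₁ := f₁.quotKerEquivOfSurjective hsurj₁
    let e₂ := f₂.quotKerEquivOfSurjective hsurj₂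
    let g : (Fin k → F) ≃ₗ[F] (Fin k → F) :=
      e₁.symm.trans ((Submodule.quotEquivOfEq _ _ hkk).trans e₂)
    have hg : ∀ c : Fin n → F, g (f₁ c) = f₂ c := by
      intro c
      have h1 : e₁ (Submodule.Quotient.mk c) = f₁ c := rfl
      have h2 : e₁.symm (f₁ c) = Submodule.Quotient.mk c := by
        rw [← h1, LinearEquiv.symm_apply_apply]
      show ((Submodule.quotEquivOfEq _ _ hkk).trans e₂) (e₁.symm (f₁ c)) = f₂ c
      rw [h2]
      rfl
    -- S and its basic properties
    let A := LinearMap.toMatrix' g.toLinearMap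
    have hAapp : ∀ v : Fin k → F, Matrix.vecMul v A.transpose = g v := by
      intro v
      rw [Matrix.vecMul_transpose]
      show Matrix.toLin' (LinearMap.toMatrix' g.toLinearMap) v = g v
      rw [Matrix.toLin'_toMatrix']
      rfl
    have hAunit : IsUnit A := by
      refine isUnit_iff_exists.mpr ⟨LinearMap.toMatrix' g.symm.toLinearMap, ?_, ?_⟩ <;>
        rw [← LinearMap.toMatrix'_comp] <;>
        simp [LinearMap.toMatrix'_id]
    have hSunit : IsUnit A.transpose := by
      rw [Matrix.isUnit_iff_isUnit_det, Matrix.det_transpose,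
        ← Matrix.isUnit_iff_isUnit_det]
      exact hAunit
    have hSdet : IsUnit A.transpose.det := (Matrix.isUnit_iff_isUnit_det _).mp hSunit
    -- the rows of M₁ are mapped by S = Aᵀ to the rows of M₂
    have hrow : ∀ j : Fin n,
        Matrix.vecMul ((tauMap θ T₁)^[(j : ℕ)] P₁) A.transpose = (tauMap θ T₂)^[(j : ℕ)] P₂ := by
      intro j
      rw [hAapp]
      have h1 : f₁ (Pi.single j 1) = (tauMap θ T₁)^[(j : ℕ)] P₁ := by
        rw [hf₁def, Matrix.vecMulLinear_apply, Matrix.single_vecMul]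
        funext i; simp [hM₁]
      have h2 : f₂ (Pi.single j 1) = (tauMap θ T₂)^[(j : ℕ)] P₂ := by
        rw [hf₂def, Matrix.vecMulLinear_apply, Matrix.single_vecMul]
        funext i; simp [hM₂]
      rw [← h1, ← h2, hg]
    have hrowP : Matrix.vecMul P₁ A.transpose = P₂ := by
      have := hrow ⟨0, by omega⟩
      simpa using this
    -- the semilinear compatibility on the rows of M₁
    have hcomp : ∀ j : Fin n,
        tauMap θ T₂ (Matrix.vecMul ((tauMap θ T₁)^[(j : ℕ)] P₁) A.transpose) =
          Matrix.vecMul (tauMap θ T₁ ((tauMap θ T₁)^[(j : ℕ)] P₁)) A.transpose := by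
      intro j
      rw [hrow j, ← Function.iterate_succ_apply' (tauMap θ T₂),
        ← Function.iterate_succ_apply' (tauMap θ T₁)]
      by_cases hj : (j : ℕ) + 1 < n
      · exact (hrow ⟨(j : ℕ) + 1, hj⟩).symm
      · have hjn : ((j : ℕ)).succ = n := by omega
        rw [hjn, hP₁, hP₂, Matrix.smul_vecMul, hrowP]
    -- the rows of M₁ span everything
    have hspan : Submodule.span F (Set.range M₁) = ⊤ := by
      rw [show Set.range M₁ = Set.range M₁.row from rfl, ← range_vecMulLinear, ← hf₁def]
      exact LinearMap.range_eq_top.mpr hsurj₁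
    -- extend semilinear compatibility to all vectors by span induction
    have hall : ∀ v : Fin k → F,
        tauMap θ T₂ (Matrix.vecMul v A.transpose) =
          Matrix.vecMul (tauMap θ T₁ v) A.transpose := by
      intro v
      have hv : v ∈ Submodule.span F (Set.range M₁) := by rw [hspan]; trivial
      induction hv using Submodule.span_induction with
      | mem x hx =>
        obtain ⟨j, rfl⟩ := hx
        exact hcomp j
      | zero =>
        rw [Matrix.zero_vecMul, tauMap_zero, tauMap_zero, Matrix.zero_vecMul]
      | add x y hx hy ihx ihy =>
        rw [Matrix.add_vecMul, tauMap_add, tauMap_add, Matrix.add_vecMul, ihx, ihy]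
      | smul a x hx ihx =>
        rw [Matrix.smul_vecMul, tauMap_smul, tauMap_smul, Matrix.smul_vecMul, ihx]
    refine ⟨A.transpose, hSunit, hrowP, fun v => ?_⟩
    have := hall (Matrix.vecMul v (A.transpose)⁻¹)
    rwa [Matrix.vecMul_vecMul, Matrix.nonsing_inv_mul _ hSdet, Matrix.vecMul_one] at this
  · -- backward direction
    rintro ⟨S, hS, hPS, hτ⟩
    have hSdet : IsUnit S.det := (Matrix.isUnit_iff_isUnit_det S).mp hS
    have hiter : ∀ m : ℕ, (tauMap θ T₂)^[m] P₂ = Matrix.vecMul ((tauMap θ T₁)^[m] P₁) S := by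
      intro m
      induction m with
      | zero => simp [hPS]
      | succ m ih =>
        rw [Function.iterate_succ_apply', Function.iterate_succ_apply', ih, hτ,
          Matrix.vecMul_vecMul, Matrix.mul_nonsing_inv _ hSdet, Matrix.vecMul_one]
    have hzero : ∀ x : Fin k → F, Matrix.vecMul x S = 0 ↔ x = 0 := by
      intro x
      constructor
      · intro h
        have : Matrix.vecMul (Matrix.vecMul x S) S⁻¹ = Matrix.vecMul (0 : Fin k → F) S⁻¹ := by
          rw [h]
        rwa [Matrix.vecMul_vecMul, Matrix.mul_nonsing_inv _ hSdet, Matrix.vecMul_one,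
          Matrix.zero_vecMul] at this
      · intro h; rw [h, Matrix.zero_vecMul]
    ext c
    rw [← SetLike.mem_coe, ← SetLike.mem_coe (p := C₂), hC₁, hC₂, Set.mem_setOf_eq, Set.mem_setOf_eq]
    have hsum : ∑ i : Fin n, c i • (tauMap θ T₂)^[(i : ℕ)] P₂ =
        Matrix.vecMul (∑ i : Fin n, c i • (tauMap θ T₁)^[(i : ℕ)] P₁) S := by
      rw [show Matrix.vecMul (∑ i : Fin n, c i • (tauMap θ T₁)^[(i : ℕ)] P₁) S =
          ∑ i : Fin n, Matrix.vecMul (c i • (tauMap θ T₁)^[(i : ℕ)] P₁) S from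
        map_sum S.vecMulLinear _ _]
      refine Finset.sum_congr rfl fun i _ => ?_
      rw [hiter, Matrix.smul_vecMul]
    rw [hsum, hzero]
end

section
/- Let p be a prime, t ≥ 2, 1 ≤ s ≤ t−1, q = p^t, and let θ be the automorphism of 𝔽_q given by θ(a) = a^{p^s}. Let f_0, ..., f_k ∈ 𝔽_q with f_k ≠ 0 and let n > k. Let C ⊆ 𝔽_q^n be the code generated by f(t) = ∑_{i=0}^{k} f_i t^i in 𝔽_q[t;θ], and let C^{[]_s} ⊆ 𝔽_q^{[n]_s} be the code generated by the [p^s]-polynomial f^{[]_s}(X) = ∑_{i=0}^{k} f_i·X^{[i]_s} in 𝔽_q[X], i.e., the 𝔽_q-span of the coefficient vectors of X^j·f^{[]_s}(X) for 0 ≤ j ≤ [n]_s − 1 − [k]_s. Then d(C^{[]_s}) ≤ d(C), i.e., the minimum Hamming weight of a nonzero codeword of C^{[]_s} is at most the minimum Hamming weight of a nonzero codeword of C. -/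
/-- `br p s i = [i]_s = 1 + p^s + p^{2s} + ⋯ + p^{(i-1)s} = ((p^s)^i - 1)/(p^s - 1)`. -/
def br (p s i : ℕ) : ℕ := ∑ j ∈ Finset.range i, (p ^ s) ^ j

/-- `genVec n θ a j` is the coefficient vector of `t^j · a(t)` in `𝔽_q[t;θ]`:
it has entry `θ^j(a_i)` in position `i + j` and `0` in positions `< j`. -/
def genVec (n : ℕ) {F : Type*} [Field F] (θ : F ≃+* F) (a : ℕ → F) (j : ℕ) :
    Fin n → F :=
  fun idx => if j ≤ idx.val then (⇑θ)^[j] (a (idx.val - j)) else 0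

/-- The minimum Hamming distance of a (nonzero) linear code: the minimum
Hamming weight of a nonzero codeword. -/
noncomputable def minDist {n : ℕ} {F : Type*} [Field F] [DecidableEq F]
    (C : Set (Fin n → F)) : ℕ :=
  sInf {d | ∃ c ∈ C, c ≠ 0 ∧ hammingNorm c = d}

lemma br_add (p s j i : ℕ) : br p s (j + i) = br p s j + (p ^ s) ^ j * br p s i := by
  unfold br
  rw [Finset.sum_range_add, Finset.mul_sum]
  congr 1
  exact Finset.sum_congr rfl fun x _ => by rw [← pow_add]

lemma br_strictMono {p : ℕ} (hp : 0 < p) (s : ℕ) : StrictMono (br p s) := by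
  apply strictMono_nat_of_lt_succ
  intro i
  have : br p s (i + 1) = br p s i + (p ^ s) ^ i * br p s 1 := br_add p s i 1
  have h1 : br p s 1 = 1 := by simp [br]
  have : 0 < (p ^ s) ^ i := pow_pos (pow_pos hp s) i
  simp only [br, Finset.sum_range_succ]
  omega

lemma theta_iter {F : Type*} [Field F] {p s : ℕ} (θ : F ≃+* F)
    (hθ : ∀ a : F, θ a = a ^ p ^ s) (j : ℕ) (a : F) :
    (⇑θ)^[j] a = a ^ (p ^ s) ^ j := by
  induction j generalizing a with
  | zero => simp
  | succ m ih =>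
    rw [Function.iterate_succ_apply, ih, hθ, ← pow_mul, ← pow_succ']

/-- with `C` the code of length `n` generated by
`f(t) = ∑_{i=0}^k f_i t^i` in `𝔽_q[t;θ]` (`θ(a) = a^{p^s}`), and `C^{[]ₛ}` the
code of length `[n]_s` generated by `f^{[]ₛ}(X) = ∑ f_i X^{[i]_s}` in `𝔽_q[X]`,
one has `d(C^{[]ₛ}) ≤ d(C)`. -/
theorem stmt_10 {p t s : ℕ} (hp : p.Prime) (ht : 2 ≤ t) (hs1 : 1 ≤ s)
    (hs2 : s ≤ t - 1)
    {F : Type*} [Field F] [Fintype F] [DecidableEq F]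
    (hF : Fintype.card F = p ^ t)
    (θ : F ≃+* F) (hθ : ∀ a : F, θ a = a ^ p ^ s)
    (n k : ℕ) (hkn : k < n)
    (f : ℕ → F) (hfk : f k ≠ 0) (hftop : ∀ i, k < i → f i = 0) :
    minDist ((Submodule.span F {u : Fin (br p s n) → F |
        ∃ j < br p s n - br p s k,
          u = fun idx : Fin (br p s n) =>
            (Polynomial.X ^ j *
              ∑ i ∈ Finset.range (k + 1),
                Polynomial.C (f i) * Polynomial.X ^ br p s i).coeff idx.val} :
        Submodule F (Fin (br p s n) → F)) : Set (Fin (br p s n) → F)) ≤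
    minDist ((Submodule.span F {v : Fin n → F | ∃ j < n - k, v = genVec n θ f j} :
        Submodule F (Fin n → F)) : Set (Fin n → F)) := by
  classical
  have hmono : StrictMono (br p s) := br_strictMono hp.pos s
  have hKN : br p s k < br p s n := hmono hkn
  -- characteristic p
  haveI hcharF : CharP F p := by
    haveI h1 : CharP F (ringChar F) := ringChar.charP F
    have hr : (ringChar F).Prime := CharP.char_is_prime F (ringChar F)
    obtain ⟨m, -, hcard⟩ := FiniteField.card F (ringChar F)
    have hdvd : ringChar F ∣ p ^ t := by
      rw [← hF, hcard]; exact dvd_pow_self _ m.pos.ne'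
    have heq := (Nat.prime_dvd_prime_iff_eq hr hp).mp (hr.dvd_of_dvd_pow hdvd)
    rwa [heq] at h1
  haveI : ExpChar (Polynomial F) p := .prime hp
  set fbr : Polynomial F :=
    ∑ i ∈ Finset.range (k + 1), Polynomial.C (f i) * Polynomial.X ^ br p s i with hfbr
  set T : Set (Fin (br p s n) → F) := {u : Fin (br p s n) → F |
      ∃ j < br p s n - br p s k,
        u = fun idx : Fin (br p s n) => (Polynomial.X ^ j * fbr).coeff idx.val} with hT
  set S : Set (Fin n → F) := {v : Fin n → F | ∃ j < n - k, v = genVec n θ f j} with hS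
  -- the linear embedding
  set Ψ : (Fin n → F) → (Fin (br p s n) → F) :=
    fun c idx => ∑ m : Fin n, if br p s m.val = idx.val then c m else 0 with hΨ
  have hbrlt : ∀ m : Fin n, br p s m.val < br p s n := fun m => hmono m.isLt
  have key1 : ∀ (c : Fin n → F) (m : Fin n), Ψ c ⟨br p s m.val, hbrlt m⟩ = c m := by
    intro c m
    simp only [hΨ]
    refine Finset.sum_eq_single_of_mem m (Finset.mem_univ m) ?_ |>.trans (if_pos rfl)
    intro b _ hb
    rw [if_neg]
    intro hbb
    exact hb (Fin.ext (hmono.injective hbb))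
  have key2 : ∀ c : Fin n → F, hammingNorm (Ψ c) ≤ hammingNorm c := by
    intro c
    unfold hammingNorm
    have hsub : Finset.filter (fun idx => Ψ c idx ≠ 0) Finset.univ ⊆
        (Finset.filter (fun m => c m ≠ 0) Finset.univ).image
          (fun m : Fin n => (⟨br p s m.val, hbrlt m⟩ : Fin (br p s n))) := by
      intro idx hidx
      simp only [Finset.mem_filter, Finset.mem_univ, true_and, hΨ] at hidx
      obtain ⟨m, -, hm⟩ := Finset.exists_ne_zero_of_sum_ne_zero hidx
      by_cases h : br p s m.val = idx.val
      · refine Finset.mem_image.mpr ⟨m, ?_, Fin.ext h⟩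
        simp only [Finset.mem_filter, Finset.mem_univ, true_and]
        intro hc0
        exact hm (by rw [if_pos h, hc0])
      · exact absurd (if_neg h) hm
    exact le_trans (Finset.card_le_card hsub) Finset.card_image_le
  -- Ψ is linear (pointwise facts)
  have hΨadd : ∀ x y : Fin n → F, Ψ (x + y) = Ψ x + Ψ y := by
    intro x y
    funext idx
    simp only [hΨ, Pi.add_apply]
    rw [← Finset.sum_add_distrib]
    exact Finset.sum_congr rfl fun m _ => by split_ifs <;> simp
  have hΨsmul : ∀ (a : F) (x : Fin n → F), Ψ (a • x) = a • Ψ x := by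
    intro a x
    funext idx
    simp only [hΨ, Pi.smul_apply, smul_eq_mul, Finset.mul_sum]
    exact Finset.sum_congr rfl fun m _ => by split_ifs <;> simp
  have hΨzero : Ψ 0 = 0 := by
    funext idx; simp [hΨ]
  -- membership lemma for multiples of fbr
  set gen : ℕ → (Fin (br p s n) → F) :=
    fun m idx => (Polynomial.X ^ m * fbr).coeff idx.val with hgendef
  have hmemlem : ∀ g : Polynomial F, g.natDegree < br p s n - br p s k →
      (fun idx : Fin (br p s n) => (g * fbr).coeff idx.val) ∈ Submodule.span F T := by
    intro g hg
    have hrep : (fun idx : Fin (br p s n) => (g * fbr).coeff idx.val)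
        = ∑ m ∈ Finset.range (br p s n - br p s k), g.coeff m • gen m := by
      funext idx
      rw [Finset.sum_apply]
      conv_lhs => rw [Polynomial.as_sum_range' g _ hg]
      rw [Finset.sum_mul, Polynomial.finset_sum_coeff]
      refine Finset.sum_congr rfl fun m _ => ?_
      simp only [Pi.smul_apply, hgendef, smul_eq_mul,
        ← Polynomial.C_mul_X_pow_eq_monomial, mul_assoc, Polynomial.coeff_C_mul]
    rw [hrep]
    exact Submodule.sum_mem _ fun m hm => Submodule.smul_mem _ _
      (Submodule.subset_span
        (show gen m ∈ T from ⟨m, Finset.mem_range.mp hm, rfl⟩))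
  -- the key generator computation
  have key3 : ∀ v ∈ S, Ψ v ∈ Submodule.span F T := by
    rintro v ⟨j, hj, rfl⟩
    set E := (p ^ s) ^ j with hE
    have hE1 : 1 ≤ E := Nat.one_le_pow _ _ (pow_pos hp.pos s)
    have hpow : fbr ^ E = ∑ i ∈ Finset.range (k + 1),
        Polynomial.C (f i ^ E) * Polynomial.X ^ (br p s i * E) := by
      rw [hfbr, hE, ← pow_mul, sum_pow_char_pow]
      refine Finset.sum_congr rfl fun i _ => ?_
      rw [mul_pow, ← Polynomial.C_pow, ← pow_mul, pow_mul p s j]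
    have hgen : Polynomial.X ^ br p s j * fbr ^ E
        = ∑ i ∈ Finset.range (k + 1),
            Polynomial.C (f i ^ E) * Polynomial.X ^ br p s (i + j) := by
      rw [hpow, Finset.mul_sum]
      refine Finset.sum_congr rfl fun i _ => ?_
      rw [add_comm i j, br_add, pow_add]
      ring
    have hfactor : Polynomial.X ^ br p s j * fbr ^ E
        = (Polynomial.X ^ br p s j * fbr ^ (E - 1)) * fbr := by
      rw [mul_assoc, ← pow_succ, Nat.sub_add_cancel hE1]
    have hdeg : (Polynomial.X ^ br p s j * fbr ^ (E - 1)).natDegree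
        < br p s n - br p s k := by
      have hd1 : fbr.natDegree ≤ br p s k := by
        rw [hfbr]
        refine Polynomial.natDegree_sum_le_of_forall_le _ _ fun i hi => ?_
        exact le_trans (Polynomial.natDegree_C_mul_X_pow_le _ _)
          (hmono.monotone (Nat.lt_succ_iff.mp (Finset.mem_range.mp hi)))
      have hd2 : (Polynomial.X ^ br p s j * fbr ^ (E - 1)).natDegree
          ≤ br p s j + (E - 1) * br p s k := by
        refine le_trans Polynomial.natDegree_mul_le (add_le_add ?_ ?_)
        · exact le_of_eq (Polynomial.natDegree_X_pow _)
        · exact le_trans Polynomial.natDegree_pow_le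
            (Nat.mul_le_mul_left _ hd1)
      have hjk : br p s (j + k) < br p s n := hmono (by omega)
      rw [br_add] at hjk
      have hmul : (E - 1) * br p s k + br p s k = E * br p s k := by
        conv_rhs => rw [← Nat.succ_pred_eq_of_pos hE1]
        rw [Nat.succ_mul]
        rfl
      have hEK : E * br p s k = (p ^ s) ^ j * br p s k := by rw [hE]
      omega
    have hfun : Ψ (genVec n θ f j)
        = fun idx : Fin (br p s n) =>
            ((Polynomial.X ^ br p s j * fbr ^ (E - 1)) * fbr).coeff idx.val := by
      rw [← hfactor, hgen]
      funext idx
      simp only [hΨ, Polynomial.finset_sum_coeff, Polynomial.coeff_C_mul_X_pow]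
      by_cases hcase : ∃ i, i ≤ k ∧ idx.val = br p s (i + j)
      · obtain ⟨i, hik, hival⟩ := hcase
        have hijn : i + j < n := by omega
        have hL : (∑ m : Fin n, if br p s m.val = idx.val
            then genVec n θ f j m else 0) = genVec n θ f j ⟨i + j, hijn⟩ := by
          refine Finset.sum_eq_single_of_mem ⟨i + j, hijn⟩ (Finset.mem_univ _) ?_
            |>.trans (if_pos hival.symm)
          intro b _ hb
          rw [if_neg]
          intro hbb
          rw [hival] at hbb
          exact hb (Fin.ext (hmono.injective hbb))
        have hR : (∑ m ∈ Finset.range (k + 1), if idx.val = br p s (m + j)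
            then f m ^ E else 0) = f i ^ E := by
          refine Finset.sum_eq_single_of_mem i
            (Finset.mem_range.mpr (by omega)) ?_ |>.trans (if_pos hival)
          intro b _ hb
          rw [if_neg]
          intro hbb
          rw [hival] at hbb
          have h2 : i + j = b + j := hmono.injective hbb
          exact hb (by omega)
        rw [hL, hR, genVec]
        simp only [Nat.le_add_left, if_pos, Nat.add_sub_cancel]
        rw [theta_iter θ hθ, hE]
      · push_neg at hcase
        have hL : (∑ m : Fin n, if br p s m.val = idx.val
            then genVec n θ f j m else 0) = 0 := by
          refine Finset.sum_eq_zero fun m _ => ?_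
          by_cases h1 : br p s m.val = idx.val
          · rw [if_pos h1, genVec]
            by_cases h2 : j ≤ m.val
            · rw [if_pos h2]
              by_cases h3 : m.val - j ≤ k
              · exact absurd (by rw [← h1]; congr 1; omega)
                  (hcase (m.val - j) h3)
              · rw [hftop _ (by omega), theta_iter θ hθ]
                exact zero_pow (by positivity)
            · exact if_neg h2
          · exact if_neg h1
        have hR : (∑ m ∈ Finset.range (k + 1), if idx.val = br p s (m + j)
            then f m ^ E else 0) = 0 := by
          refine Finset.sum_eq_zero fun m hm => ?_
          exact if_neg (hcase m (Nat.lt_succ_iff.mp (Finset.mem_range.mp hm)))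
        rw [hL, hR]
    rw [hfun]
    exact hmemlem _ hdeg
  -- the span transport
  have hspan : ∀ c ∈ Submodule.span F S, Ψ c ∈ Submodule.span F T := by
    intro c hc
    induction hc using Submodule.span_induction with
    | mem x hx => exact key3 x hx
    | zero => rw [hΨzero]; exact Submodule.zero_mem _
    | add x y _ _ hx hy => rw [hΨadd]; exact Submodule.add_mem _ hx hy
    | smul a x _ hx => rw [hΨsmul]; exact Submodule.smul_mem _ _ hx
  -- nonemptiness of the weight set for C
  have hkn' : (0 : ℕ) < n - k := by omega
  have hc0mem : genVec n θ f 0 ∈ S := ⟨0, hkn', rfl⟩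
  have hc0ne : genVec n θ f 0 ≠ 0 := by
    intro h0
    have := congrFun h0 ⟨k, hkn⟩
    simp [genVec] at this
    exact hfk this
  have hBne : {d | ∃ c ∈ (Submodule.span F S : Set (Fin n → F)), c ≠ 0 ∧
      hammingNorm c = d}.Nonempty :=
    ⟨hammingNorm (genVec n θ f 0), genVec n θ f 0,
      Submodule.subset_span hc0mem, hc0ne, rfl⟩
  unfold minDist
  obtain ⟨c, hcmem, hcne, hcnorm⟩ := Nat.sInf_mem hBne
  have hune : Ψ c ≠ 0 := by
    intro h0
    apply hcne
    funext m
    have h := key1 c m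
    rw [h0] at h
    simpa using h.symm
  calc sInf {d | ∃ u ∈ (Submodule.span F T : Set (Fin (br p s n) → F)), u ≠ 0 ∧
        hammingNorm u = d}
      ≤ hammingNorm (Ψ c) := Nat.sInf_le ⟨Ψ c, hspan c hcmem, hune, rfl⟩
    _ ≤ hammingNorm c := key2 c
    _ = _ := hcnorm
end
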